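/- Let X ⊆ ℕ² be standardization-invariant. Let I = {i₁ < i₂ < ⋯ < i_k} ⊆ [n-1], set i₀ = 0, and let n ≥ max(I). Then d_X(I;n) = Σ over subsets {j₁ < ⋯ < j_r} ⊆ {1,…,k} of (−1)^{k−r} · C(n, i_{j_r}) · C(i_{j_r}, i_{j_{r−1}}) ⋯ C(i_{j_2}, i_{j_1}) · Π_{t=0}^{r} d_X(∅; i_{j_{t+1}} − i_{j_t}), where j₀ = 0, i_{j₀} = 0, and i_{j_{r+1}} = n (for r = 0 the empty product of binomials is 1 and the product term is d_X(∅;n)). -/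

import Mathlib

open Classical in
/-- The `X`-descent set of a word `w = w₁⋯w_n` (stored 0-indexed as a list), as a subset of
`[n-1] = {1, …, n-1}`: position `i` is an `X`-descent iff `(w_i, w_{i+1}) ∈ X`. -/
noncomputable def XDes (X : Set (ℕ × ℕ)) (w : List ℕ) : Finset ℕ :=
  (Finset.Icc 1 (w.length - 1)).filter (fun i => (w.getD (i - 1) 0, w.getD i 0) ∈ X)

/-- `dX X I S` is the number of permutations of the finite label set `S ⊆ ℕ` (written in
one-line notation as duplicate-free lists using exactly the labels of `S`) whose
`X`-descent set is exactly `I`. -/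
noncomputable def dX (X : Set (ℕ × ℕ)) (I : Finset ℕ) (S : Finset ℕ) : ℕ :=
  Nat.card {w : List ℕ // w.Nodup ∧ w.toFinset = S ∧ XDes X w = I}

/-- `dXn X I n = dX X I [n]` where `[n] = {1, …, n}`. -/
noncomputable def dXn (X : Set (ℕ × ℕ)) (I : Finset ℕ) (n : ℕ) : ℕ :=
  dX X I (Finset.Icc 1 n)

/-- The product of binomial coefficients `C(c₂,c₁)·C(c₃,c₂)⋯` along consecutive entries of a
list `[c₁, c₂, …]`. -/
def chainBinom (M : List ℕ) : ℕ :=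
  (List.zipWith (fun a b => Nat.choose b a) M M.tail).prod

/-- The list of consecutive differences `[c₂ − c₁, c₃ − c₂, …]` of a list `[c₁, c₂, …]`. -/
def gapList (M : List ℕ) : List ℕ :=
  List.zipWith (fun a b => b - a) M M.tail

/-! ### list lemmas -/

lemma zipWith_tail_append (f : ℕ → ℕ → ℕ) (c : ℕ) :
    ∀ (M : List ℕ) (x : ℕ),
      List.zipWith f (x :: (M ++ [c])) (M ++ [c]) =
        List.zipWith f (x :: M) M ++ [f ((x :: M).getLast (by simp)) c]
  | [], x => by simp
  | y :: M, x => by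
    have := zipWith_tail_append f c M y
    simp only [List.cons_append, List.zipWith_cons_cons] at this ⊢
    rw [this]
    simp

lemma chainBinom_append (x : ℕ) (M : List ℕ) (c : ℕ) :
    chainBinom (x :: (M ++ [c])) =
      chainBinom (x :: M) * Nat.choose c ((x :: M).getLast (by simp)) := by
  unfold chainBinom
  rw [List.tail_cons, zipWith_tail_append, List.prod_append]
  simp

lemma gapList_append (x : ℕ) (M : List ℕ) (c : ℕ) :
    gapList (x :: (M ++ [c])) = gapList (x :: M) ++ [c - (x :: M).getLast (by simp)] := by
  unfold gapList
  rw [List.tail_cons, zipWith_tail_append]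
  rfl

lemma getD_append_left {u v : List ℕ} {j : ℕ} (h : j < u.length) (d : ℕ) :
    (u ++ v).getD j d = u.getD j d := by
  rw [List.getD_eq_getElem?_getD, List.getD_eq_getElem?_getD, List.getElem?_append_left h]

lemma getD_append_right {u v : List ℕ} {j : ℕ} (h : u.length ≤ j) (d : ℕ) :
    (u ++ v).getD j d = v.getD (j - u.length) d := by
  rw [List.getD_eq_getElem?_getD, List.getD_eq_getElem?_getD, List.getElem?_append_right h]

lemma mem_XDes {X : Set (ℕ × ℕ)} {w : List ℕ} {i : ℕ} :
    i ∈ XDes X w ↔ 1 ≤ i ∧ i ≤ w.length - 1 ∧ (w.getD (i - 1) 0, w.getD i 0) ∈ X := by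
  simp only [XDes, Finset.mem_filter, Finset.mem_Icc]
  tauto

lemma XDes_subset_Icc (X : Set (ℕ × ℕ)) (w : List ℕ) :
    XDes X w ⊆ Finset.Icc 1 (w.length - 1) := fun i hi => by
  have h := mem_XDes.1 hi
  exact Finset.mem_Icc.2 ⟨h.1, h.2.1⟩

lemma XDes_append {X : Set (ℕ × ℕ)} {u v : List ℕ} {C : Finset ℕ} {c : ℕ}
    (hu : u.length = c) (hc : 1 ≤ c) (hv : 1 ≤ v.length)
    (hC : C ⊆ Finset.Icc 1 c) (hcC : c ∈ C) :
    XDes X (u ++ v) ⊆ C ↔ XDes X u ⊆ C ∧ XDes X v = ∅ := by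
  have hlen : (u ++ v).length = c + v.length := by rw [List.length_append, hu]
  constructor
  · intro h
    constructor
    · intro i hi
      obtain ⟨h1, h2, h3⟩ := mem_XDes.1 hi
      rw [hu] at h2
      apply h
      rw [mem_XDes, hlen]
      refine ⟨h1, by omega, ?_⟩
      rw [getD_append_left (by omega), getD_append_left (by omega)]
      exact h3
    · rw [Finset.eq_empty_iff_forall_notMem]
      intro j hj
      obtain ⟨h1, h2, h3⟩ := mem_XDes.1 hj
      have : c + j ∈ C := by
        apply h
        rw [mem_XDes, hlen]
        refine ⟨by omega, by omega, ?_⟩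
        rw [getD_append_right (by omega), getD_append_right (by omega)]
        rw [hu, show c + j - 1 - c = j - 1 by omega, show c + j - c = j by omega]
        exact h3
      have := Finset.mem_Icc.1 (hC this)
      omega
  · rintro ⟨h1, h2⟩
    intro i hi
    obtain ⟨hi1, hi2, hi3⟩ := mem_XDes.1 hi
    rw [hlen] at hi2
    rcases lt_trichotomy i c with hlt | rfl | hgt
    · apply h1
      rw [mem_XDes, hu]
      refine ⟨hi1, by omega, ?_⟩
      rw [getD_append_left (by omega) 0, getD_append_left (by omega) 0] at hi3
      exact hi3
    · exact hcC
    · exfalso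
      have : i - c ∈ XDes X v := by
        rw [mem_XDes]
        refine ⟨by omega, by omega, ?_⟩
        rw [getD_append_right (by omega) 0, getD_append_right (by omega) 0, hu,
          show i - 1 - c = i - c - 1 by omega] at hi3
        exact hi3
      rw [h2] at this
      exact absurd this (Finset.notMem_empty _)

lemma sort_max_append {C : Finset ℕ} (hC : C.Nonempty) :
    C.sort (· ≤ ·) = (C.erase (C.max' hC)).sort (· ≤ ·) ++ [C.max' hC] := by
  set c := C.max' hC
  have h1 : ((C.erase c).sort (· ≤ ·) ++ [c]).Pairwise (· ≤ ·) := by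
    refine List.pairwise_append.2 ⟨Finset.pairwise_sort .., List.pairwise_singleton _ _, ?_⟩
    intro a ha b hb
    rw [Finset.mem_sort] at ha
    rw [List.mem_singleton] at hb
    subst hb
    exact C.le_max' a (Finset.mem_of_mem_erase ha)
  refine List.Perm.eq_of_pairwise' (Finset.pairwise_sort ..) h1 ?_
  have hnd : ((C.erase c).sort (· ≤ ·) ++ [c]).Nodup := by
    rw [List.nodup_append']
    refine ⟨Finset.sort_nodup _ _, List.nodup_singleton _, ?_⟩
    intro a ha hb
    rw [Finset.mem_sort] at ha
    rw [List.mem_singleton] at hb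
    subst hb
    exact (Finset.notMem_erase _ _) ha
  have htf : ((C.erase c).sort (· ≤ ·) ++ [c]).toFinset = C := by
    rw [List.toFinset_append, Finset.sort_toFinset]
    simp only [List.toFinset_cons, List.toFinset_nil, LawfulSingleton.insert_empty_eq]
    rw [Finset.union_comm, ← Finset.insert_eq, Finset.insert_erase (C.max'_mem hC)]
  have := List.toFinset_eq_iff_perm_dedup.1 (htf.trans (C.sort_toFinset (· ≤ ·)).symm)
  rw [List.dedup_eq_self.2 hnd, List.dedup_eq_self.2 (C.sort_nodup _)] at this
  exact this.symm

/-! ### counting basics -/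

noncomputable def permsF (S : Finset ℕ) : Finset (List ℕ) :=
  (S.sort (· ≤ ·)).permutations.toFinset

lemma mem_permsF {S : Finset ℕ} {w : List ℕ} :
    w ∈ permsF S ↔ w.Nodup ∧ w.toFinset = S := by
  have hnd : (S.sort (· ≤ ·)).Nodup := S.sort_nodup _
  have htf : (S.sort (· ≤ ·)).toFinset = S := S.sort_toFinset _
  constructor
  · intro h
    have hp : w.Perm (S.sort (· ≤ ·)) := List.mem_permutations.1 (List.mem_toFinset.1 h)
    refine ⟨hp.nodup_iff.2 hnd, ?_⟩
    rw [← htf]; exact List.toFinset_eq_of_perm _ _ hp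
  · rintro ⟨h1, h2⟩
    refine List.mem_toFinset.2 (List.mem_permutations.2 ?_)
    have : w.toFinset = (S.sort (· ≤ ·)).toFinset := by rw [h2, htf]
    have := List.toFinset_eq_iff_perm_dedup.1 this
    rwa [List.dedup_eq_self.2 h1, List.dedup_eq_self.2 hnd] at this

lemma length_of_mem_permsF {S : Finset ℕ} {w : List ℕ} (h : w ∈ permsF S) :
    w.length = S.card := by
  obtain ⟨h1, h2⟩ := mem_permsF.1 h
  rw [← h2, List.toFinset_card_of_nodup h1]

open Classical in
lemma dX_card (X : Set (ℕ × ℕ)) (I S : Finset ℕ) :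
    dX X I S = ((permsF S).filter (fun w => XDes X w = I)).card := by
  rw [dX]
  have h : {w : List ℕ | w.Nodup ∧ w.toFinset = S ∧ XDes X w = I} =
      ↑((permsF S).filter (fun w => XDes X w = I)) := by
    ext w
    simp only [Set.mem_setOf_eq, Finset.coe_filter, Set.mem_setOf_eq, mem_permsF]
    tauto
  rw [← Set.ncard_coe_finset, ← h]
  rfl

open Classical in
noncomputable def betaC (X : Set (ℕ × ℕ)) (C S : Finset ℕ) : ℕ :=
  ((permsF S).filter (fun w => XDes X w ⊆ C)).card

open Classical in
lemma betaC_eq_sum (X : Set (ℕ × ℕ)) (C S : Finset ℕ) :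
    betaC X C S = ∑ J ∈ C.powerset, dX X J S := by
  rw [betaC]
  rw [Finset.card_eq_sum_card_fiberwise (f := fun w => XDes X w)
    (t := C.powerset) (fun w hw => Finset.mem_powerset.2 (Finset.mem_filter.1 hw).2)]
  refine Finset.sum_congr rfl fun J hJ => ?_
  rw [dX_card, Finset.filter_filter]
  apply congrArg
  apply Finset.filter_congr
  intro w _
  constructor
  · rintro ⟨_, h⟩; exact h
  · intro h; exact ⟨by simp only []; rw [h]; exact Finset.mem_powerset.1 hJ, h⟩

lemma card_Icc_one (m : ℕ) : (Finset.Icc 1 m).card = m := by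
  rw [Nat.card_Icc]; omega

lemma betaC_std {X : Set (ℕ × ℕ)}
    (hstd : ∀ (S : Finset ℕ) (I : Finset ℕ), dX X I S = dXn X I S.card)
    (C S : Finset ℕ) : betaC X C S = betaC X C (Finset.Icc 1 S.card) := by
  rw [betaC_eq_sum, betaC_eq_sum]
  refine Finset.sum_congr rfl fun J _ => ?_
  rw [hstd S J, hstd (Finset.Icc 1 S.card) J, card_Icc_one]

lemma toFinset_drop_eq {w : List ℕ} {S T : Finset ℕ} {c : ℕ} (hnd : w.Nodup)
    (htf : w.toFinset = S) (hT : (w.take c).toFinset = T) :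
    (w.drop c).toFinset = S \ T := by
  have hw_eq : w.take c ++ w.drop c = w := List.take_append_drop c w
  have hnd' : (w.take c ++ w.drop c).Nodup := by rw [hw_eq]; exact hnd
  obtain ⟨-, -, hdisj⟩ := List.nodup_append'.1 hnd'
  have hun : T ∪ (w.drop c).toFinset = S := by
    rw [← hT, ← List.toFinset_append, hw_eq, htf]
  ext a
  rw [Finset.mem_sdiff]
  constructor
  · intro ha
    refine ⟨by rw [← hun]; exact Finset.mem_union_right _ ha, ?_⟩
    intro haT
    rw [← hT, List.mem_toFinset] at haT
    exact hdisj haT (List.mem_toFinset.1 ha)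
  · rintro ⟨haS, haT⟩
    rw [← hun] at haS
    rcases Finset.mem_union.1 haS with h | h
    · exact absurd h haT
    · exact h

open Classical in
lemma betaC_split {X : Set (ℕ × ℕ)} {S C : Finset ℕ} {c : ℕ}
    (hc1 : 1 ≤ c) (hcS : c + 1 ≤ S.card) (hC : C ⊆ Finset.Icc 1 c) (hcC : c ∈ C) :
    betaC X C S = ∑ T ∈ S.powersetCard c, betaC X C T * dX X ∅ (S \ T) := by
  rw [betaC]
  rw [Finset.card_eq_sum_card_fiberwise (f := fun w => (w.take c).toFinset)
    (t := S.powersetCard c) ?hmem]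
  case hmem =>
    intro w hw
    obtain ⟨hw1, -⟩ := Finset.mem_filter.1 hw
    obtain ⟨hnd, htf⟩ := mem_permsF.1 hw1
    have hlen : w.length = S.card := length_of_mem_permsF hw1
    rw [Finset.mem_coe, Finset.mem_powersetCard]
    constructor
    · intro x hx
      rw [List.mem_toFinset] at hx
      rw [← htf, List.mem_toFinset]
      exact List.mem_of_mem_take hx
    · rw [List.toFinset_card_of_nodup ((List.take_sublist c w).nodup hnd),
        List.length_take]
      omega
  refine Finset.sum_congr rfl fun T hT => ?_
  obtain ⟨hTS, hTc⟩ := Finset.mem_powersetCard.1 hT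
  rw [betaC, dX_card, ← Finset.card_product]
  refine Finset.card_bij' (i := fun w _ => (w.take c, w.drop c))
    (j := fun p _ => p.1 ++ p.2) ?hi ?hj ?hleft ?hright
  case hi =>
    intro w hw
    obtain ⟨hw', hTeq⟩ := Finset.mem_filter.1 hw
    obtain ⟨hw1, hXD⟩ := Finset.mem_filter.1 hw'
    obtain ⟨hnd, htf⟩ := mem_permsF.1 hw1
    have hlen : w.length = S.card := length_of_mem_permsF hw1
    have hu : (w.take c).length = c := by rw [List.length_take]; omega
    have hv : (w.drop c).length = S.card - c := by rw [List.length_drop]; omega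
    have hw_eq : w.take c ++ w.drop c = w := List.take_append_drop c w
    have hXD' : XDes X (w.take c ++ w.drop c) ⊆ C := by rw [hw_eq]; exact hXD
    obtain ⟨hXu, hXv⟩ := (XDes_append hu hc1 (by omega) hC hcC).1 hXD'
    rw [Finset.mem_product]
    constructor
    · exact Finset.mem_filter.2 ⟨mem_permsF.2 ⟨(List.take_sublist c w).nodup hnd, hTeq⟩, hXu⟩
    · exact Finset.mem_filter.2 ⟨mem_permsF.2 ⟨(List.drop_sublist c w).nodup hnd,
        toFinset_drop_eq hnd htf hTeq⟩, hXv⟩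
  case hj =>
    rintro ⟨u, v⟩ hp
    rw [Finset.mem_product] at hp
    obtain ⟨hu', hv'⟩ := hp
    obtain ⟨hu1, hXu⟩ := Finset.mem_filter.1 hu'
    obtain ⟨hv1, hXv⟩ := Finset.mem_filter.1 hv'
    obtain ⟨hndu, htfu⟩ := mem_permsF.1 hu1
    obtain ⟨hndv, htfv⟩ := mem_permsF.1 hv1
    have hul : u.length = c := by rw [length_of_mem_permsF hu1, hTc]
    have hvl : v.length = S.card - c := by
      rw [length_of_mem_permsF hv1, Finset.card_sdiff_of_subset hTS, hTc]
    have hnd : (u ++ v).Nodup := by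
      rw [List.nodup_append']
      refine ⟨hndu, hndv, fun a ha hb => ?_⟩
      have h1 : a ∈ T := by rw [← htfu]; exact List.mem_toFinset.2 ha
      have h2 : a ∈ S \ T := by rw [← htfv]; exact List.mem_toFinset.2 hb
      exact (Finset.mem_sdiff.1 h2).2 h1
    have htf : (u ++ v).toFinset = S := by
      rw [List.toFinset_append, htfu, htfv, Finset.union_sdiff_of_subset hTS]
    refine Finset.mem_filter.2 ⟨Finset.mem_filter.2 ⟨mem_permsF.2 ⟨hnd, htf⟩, ?_⟩, ?_⟩
    · exact (XDes_append hul hc1 (by rw [hvl]; omega) hC hcC).2 ⟨hXu, hXv⟩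
    · rw [List.take_left' hul, htfu]
  case hleft =>
    intro w _
    exact List.take_append_drop c w
  case hright =>
    rintro ⟨u, v⟩ hp
    rw [Finset.mem_product] at hp
    have hul : u.length = c := by rw [length_of_mem_permsF (Finset.mem_filter.1 hp.1).1, hTc]
    simp only [List.take_left' hul, List.drop_left' hul]

open Classical in
lemma betaC_erase_top {X : Set (ℕ × ℕ)} {C S : Finset ℕ} {c : ℕ} (h : S.card ≤ c) :
    betaC X C S = betaC X (C.erase c) S := by
  rw [betaC, betaC]
  apply congrArg
  apply Finset.filter_congr
  intro w hw
  have hlen : w.length = S.card := length_of_mem_permsF hw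
  constructor
  · intro hXD i hi
    have hb := Finset.mem_Icc.1 (XDes_subset_Icc X w hi)
    rw [hlen] at hb
    exact Finset.mem_erase.2 ⟨by omega, hXD hi⟩
  · intro hXD i hi
    exact Finset.mem_of_mem_erase (hXD hi)

open Classical Finset in
lemma betaC_step {X : Set (ℕ × ℕ)}
    (hstd : ∀ (S : Finset ℕ) (I : Finset ℕ), dX X I S = dXn X I S.card)
    {C : Finset ℕ} {c m : ℕ} (hc1 : 1 ≤ c) (hcm : c + 1 ≤ m)
    (hC : C ⊆ Finset.Icc 1 c) (hcC : c ∈ C) :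
    betaC X C (Finset.Icc 1 m) =
      Nat.choose m c * (betaC X (C.erase c) (Finset.Icc 1 c) * dXn X ∅ (m - c)) := by
  rw [betaC_split hc1 (by rw [card_Icc_one]; omega) hC hcC]
  have key : ∀ T ∈ (Finset.Icc 1 m).powersetCard c,
      betaC X C T * dX X ∅ (Finset.Icc 1 m \ T)
        = betaC X (C.erase c) (Finset.Icc 1 c) * dXn X ∅ (m - c) := by
    intro T hT
    obtain ⟨hTS, hTc⟩ := Finset.mem_powersetCard.1 hT
    have h1 : betaC X C T = betaC X (C.erase c) (Finset.Icc 1 c) := by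
      rw [betaC_std hstd, hTc, betaC_erase_top (c := c) (by rw [card_Icc_one])]
    have h2 : dX X ∅ (Finset.Icc 1 m \ T) = dXn X ∅ (m - c) := by
      rw [hstd, Finset.card_sdiff_of_subset hTS, card_Icc_one, hTc]
    rw [h1, h2]
  rw [Finset.sum_congr rfl key, Finset.sum_const, Finset.card_powersetCard, card_Icc_one,
    smul_eq_mul]

lemma getLast_eq_of_getLast?_eq {l : List ℕ} {h : l ≠ []} {a : ℕ}
    (hl : l.getLast? = some a) : l.getLast h = a := by
  rw [List.getLast?_eq_getLast h] at hl
  exact Option.some.inj hl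

open Classical Finset in
lemma main_formula {X : Set (ℕ × ℕ)}
    (hstd : ∀ (S : Finset ℕ) (I : Finset ℕ), dX X I S = dXn X I S.card) :
    ∀ (k m : ℕ) (C : Finset ℕ), 1 ≤ m → C.card = k → C ⊆ Finset.Icc 1 (m - 1) →
    betaC X C (Finset.Icc 1 m) = chainBinom (C.sort (· ≤ ·) ++ [m]) *
      ((gapList (0 :: (C.sort (· ≤ ·) ++ [m]))).map (fun g => dXn X ∅ g)).prod
  | 0, m, C, hm, hk, hC => by
      have hCe : C = ∅ := Finset.card_eq_zero.1 hk
      subst hCe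
      rw [Finset.sort_empty, betaC_eq_sum, Finset.powerset_empty, Finset.sum_singleton]
      have h1 : chainBinom ([] ++ [m]) = 1 := by simp [chainBinom]
      have h2 : gapList (0 :: ([] ++ [m])) = [m] := by simp [gapList]
      rw [h1, h2]
      simp [dXn]
  | (k+1), m, C, hm, hk, hC => by
      have hne : C.Nonempty := by rw [← Finset.card_pos, hk]; omega
      set c := C.max' hne with hcdef
      have hcC : c ∈ C := C.max'_mem hne
      have hcIcc := Finset.mem_Icc.1 (hC hcC)
      have hc1 : 1 ≤ c := hcIcc.1
      have hcm : c + 1 ≤ m := by omega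
      have hCc : C ⊆ Finset.Icc 1 c := fun b hb =>
        Finset.mem_Icc.2 ⟨(Finset.mem_Icc.1 (hC hb)).1, C.le_max' b hb⟩
      have hC' : C.erase c ⊆ Finset.Icc 1 (c - 1) := by
        intro b hb
        obtain ⟨hbne, hbC⟩ := Finset.mem_erase.1 hb
        have h1 := Finset.mem_Icc.1 (hC hbC)
        have h2 := C.le_max' b hbC
        exact Finset.mem_Icc.2 ⟨h1.1, by omega⟩
      have hk' : (C.erase c).card = k := by rw [Finset.card_erase_of_mem hcC, hk]; omega
      have IH := main_formula hstd k c (C.erase c) hc1 hk' hC'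
      rw [betaC_step hstd hc1 hcm hCc hcC, IH]
      set L := (C.erase c).sort (· ≤ ·) with hLdef
      have hsort : C.sort (· ≤ ·) = L ++ [c] := sort_max_append hne
      rw [hsort]
      obtain ⟨x, M, hLM⟩ := List.exists_cons_of_ne_nil
        (show L ++ [c] ≠ [] by simp)
      have hlast : (x :: M).getLast (by simp) = c :=
        getLast_eq_of_getLast?_eq (by rw [← hLM]; exact List.getLast?_concat)
      have hchain : chainBinom ((L ++ [c]) ++ [m])
          = chainBinom (L ++ [c]) * Nat.choose m c := by
        rw [hLM, List.cons_append, chainBinom_append, hlast]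
      have hgap : gapList (0 :: ((L ++ [c]) ++ [m]))
          = gapList (0 :: (L ++ [c])) ++ [m - c] := by
        have e2 : ((0 : ℕ) :: (L ++ [c])).getLast (by simp) = c :=
          getLast_eq_of_getLast?_eq
            (show (((0 : ℕ) :: L) ++ [c]).getLast? = some c from List.getLast?_concat)
        rw [gapList_append 0 (L ++ [c]) m, e2]
      rw [hchain, hgap, List.map_append, List.prod_append]
      simp only [List.map_cons, List.map_nil, List.prod_cons, List.prod_nil]
      ring

open Classical Finset in
lemma mobius_inner {I J : Finset ℕ} (hJ : J ⊆ I) :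
    ∑ C ∈ I.powerset.filter (fun C => J ⊆ C), (-1 : ℤ) ^ (I.card - C.card)
      = if J = I then 1 else 0 := by
  have h1 : ∑ C ∈ I.powerset.filter (fun C => J ⊆ C), (-1 : ℤ) ^ (I.card - C.card)
      = ∑ D ∈ (I \ J).powerset, (-1 : ℤ) ^ D.card := by
    refine Finset.sum_nbij' (i := fun C => I \ C) (j := fun D => I \ D) ?_ ?_ ?_ ?_ ?_
    · intro C hC
      obtain ⟨hCI, hJC⟩ := Finset.mem_filter.1 hC
      exact Finset.mem_powerset.2
        (Finset.sdiff_subset_sdiff (Finset.Subset.refl I) hJC)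
    · intro D hD
      have hD' := Finset.mem_powerset.1 hD
      refine Finset.mem_filter.2 ⟨Finset.mem_powerset.2 (Finset.sdiff_subset), ?_⟩
      intro a ha
      refine Finset.mem_sdiff.2 ⟨hJ ha, fun hD2 => ?_⟩
      exact (Finset.mem_sdiff.1 (hD' hD2)).2 ha
    · intro C hC
      exact Finset.sdiff_sdiff_eq_self (Finset.mem_powerset.1 (Finset.mem_filter.1 hC).1)
    · intro D hD
      exact Finset.sdiff_sdiff_eq_self
        ((Finset.mem_powerset.1 hD).trans Finset.sdiff_subset)
    · intro C hC
      rw [Finset.card_sdiff_of_subset (Finset.mem_powerset.1 (Finset.mem_filter.1 hC).1)]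
  rw [h1, Finset.sum_powerset_neg_one_pow_card]
  have : I \ J = ∅ ↔ J = I := by
    rw [Finset.sdiff_eq_empty_iff_subset]
    exact ⟨fun h => Finset.Subset.antisymm hJ h, fun h => h ▸ Finset.Subset.refl I⟩
  by_cases h : J = I
  · rw [if_pos (this.2 h), if_pos h]
  · rw [if_neg (fun he => h (this.1 he)), if_neg h]


/-- inclusion–exclusion formula. Suppose `X` is standardization-invariant,
`I = {i₁ < ⋯ < i_k} ⊆ [n-1]`. Then `d_X(I;n)` equals the sum over subsets
`{j₁ < ⋯ < j_r} ⊆ {1,…,k}` (equivalently, over subsets `C ⊆ I`, with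
`C = {i_{j₁} < ⋯ < i_{j_r}}`) of
`(−1)^{k−r} C(n, i_{j_r}) C(i_{j_r}, i_{j_{r−1}}) ⋯ C(i_{j_2}, i_{j_1}) ·
Π_{t=0}^{r} d_X(∅; i_{j_{t+1}} − i_{j_t})`, with conventions `i_{j_0} = 0`, `i_{j_{r+1}} = n`.
Here the chain of binomials is `chainBinom` of the sorted list of `C` with `n` appended, and
the gaps product is taken along `0 :: (sorted C ++ [n])`. -/
theorem stmt3 (X : Set (ℕ × ℕ))
    (hstd : ∀ (S : Finset ℕ) (I : Finset ℕ), dX X I S = dXn X I S.card)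
    (n : ℕ) (hn : 1 ≤ n) (I : Finset ℕ) (hI : I ⊆ Finset.Icc 1 (n - 1)) :
    (dXn X I n : ℤ) =
      ∑ C ∈ I.powerset,
        (-1 : ℤ) ^ (I.card - C.card) *
          (chainBinom (C.sort (· ≤ ·) ++ [n]) : ℤ) *
          ((gapList (0 :: (C.sort (· ≤ ·) ++ [n]))).map (fun g => (dXn X ∅ g : ℤ))).prod := by
  have hβ : ∀ C : Finset ℕ, (betaC X C (Finset.Icc 1 n) : ℤ)
      = ∑ J ∈ C.powerset, (dX X J (Finset.Icc 1 n) : ℤ) := fun C => by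
    rw [betaC_eq_sum]; push_cast; rfl
  have hmob : (dXn X I n : ℤ) = ∑ C ∈ I.powerset,
      (-1 : ℤ) ^ (I.card - C.card) * (betaC X C (Finset.Icc 1 n) : ℤ) := by
    have step1 : ∑ C ∈ I.powerset,
        (-1 : ℤ) ^ (I.card - C.card) * (betaC X C (Finset.Icc 1 n) : ℤ)
        = ∑ C ∈ I.powerset, ∑ J ∈ C.powerset,
            (-1 : ℤ) ^ (I.card - C.card) * (dX X J (Finset.Icc 1 n) : ℤ) := by
      refine Finset.sum_congr rfl fun C _ => ?_
      rw [hβ, Finset.mul_sum]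
    have step2 : ∑ C ∈ I.powerset, ∑ J ∈ C.powerset,
            (-1 : ℤ) ^ (I.card - C.card) * (dX X J (Finset.Icc 1 n) : ℤ)
        = ∑ J ∈ I.powerset, ∑ C ∈ I.powerset.filter (fun C => J ⊆ C),
            (-1 : ℤ) ^ (I.card - C.card) * (dX X J (Finset.Icc 1 n) : ℤ) := by
      refine Finset.sum_comm' fun C J => ?_
      simp only [Finset.mem_powerset, Finset.mem_filter]
      constructor
      · rintro ⟨h1, h2⟩; exact ⟨⟨h1, h2⟩, h2.trans h1⟩
      · rintro ⟨⟨h1, h2⟩, _⟩; exact ⟨h1, h2⟩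
    have step3 : ∑ J ∈ I.powerset, ∑ C ∈ I.powerset.filter (fun C => J ⊆ C),
            (-1 : ℤ) ^ (I.card - C.card) * (dX X J (Finset.Icc 1 n) : ℤ)
        = ∑ J ∈ I.powerset,
            (if J = I then (dX X J (Finset.Icc 1 n) : ℤ) else 0) := by
      refine Finset.sum_congr rfl fun J hJ => ?_
      rw [← Finset.sum_mul, mobius_inner (Finset.mem_powerset.1 hJ)]
      by_cases h : J = I
      · rw [if_pos h, if_pos h, one_mul]
      · rw [if_neg h, if_neg h, zero_mul]
    rw [step1, step2, step3, Finset.sum_ite_eq' I.powerset I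
      (fun J => (dX X J (Finset.Icc 1 n) : ℤ)),
      if_pos (Finset.mem_powerset.2 (Finset.Subset.refl I))]
    rfl
  rw [hmob]
  refine Finset.sum_congr rfl fun C hC => ?_
  have hCI := Finset.mem_powerset.1 hC
  have hmain := main_formula hstd C.card n C hn rfl (hCI.trans hI)
  rw [hmain]
  have hcast : ((gapList (0 :: (C.sort (· ≤ ·) ++ [n]))).map
      (fun g => (dXn X ∅ g : ℤ))).prod
      = (((gapList (0 :: (C.sort (· ≤ ·) ++ [n]))).map (fun g => dXn X ∅ g)).prod : ℤ) := by
    rw [Nat.cast_list_prod, List.map_map]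
    rfl
  rw [hcast]
  push_cast
  ring
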